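/- Let k be a field, G an abelian group, H a subgroup of G, and I an ideal of the group algebra kG. Then I = (I ∩ kH)·kG if and only if for every subgroup G_1 of G generated by H together with finitely many elements of G, one has I ∩ kG_1 = (I ∩ kH)·kG_1. -/

import Mathlib

open MonoidAlgebra Finsupp

section Aux

variable {k : Type*} [Field k] {G : Type*} [CommGroup G]

/-- Restriction of coefficients to a subgroup. -/
noncomputable def resAux (G₁ : Subgroup G) (x : MonoidAlgebra k G) : MonoidAlgebra k G₁ :=
  MonoidAlgebra.ofCoeff (Finsupp.comapDomain G₁.subtype x.coeff G₁.subtype_injective.injOn)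

lemma resAux_apply (G₁ : Subgroup G) (x : MonoidAlgebra k G) (a : G₁) :
    (resAux G₁ x).coeff a = x.coeff ↑a := rfl

lemma resAux_add (G₁ : Subgroup G) (x y : MonoidAlgebra k G) :
    resAux G₁ (x + y) = resAux G₁ x + resAux G₁ y :=
  congrArg MonoidAlgebra.ofCoeff (Finsupp.comapDomain_add_of_injective G₁.subtype_injective x.coeff y.coeff)

lemma resAux_zero (G₁ : Subgroup G) : resAux (k := k) G₁ 0 = 0 := by
  exact congrArg MonoidAlgebra.ofCoeff (Finsupp.comapDomain_zero _)

lemma resAux_map (G₁ : Subgroup G) (y : MonoidAlgebra k G₁) :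
    resAux G₁ (mapDomainAlgHom k k G₁.subtype y) = y := by
  ext a
  rw [resAux_apply, mapDomainAlgHom_apply]
  exact Finsupp.mapDomain_apply G₁.subtype_injective y.coeff a

lemma resAux_mul_single (G₁ : Subgroup G) (x : MonoidAlgebra k G) (h : G₁) (d : k) :
    resAux G₁ (x * MonoidAlgebra.single (↑h : G) d) =
      resAux G₁ x * MonoidAlgebra.single h d := by
  ext a
  rw [resAux_apply, MonoidAlgebra.coeff_mul_single_apply, MonoidAlgebra.coeff_mul_single_apply, resAux_apply]
  norm_num

lemma resAux_mul (G₁ : Subgroup G) (x : MonoidAlgebra k G) (y : MonoidAlgebra k G₁) :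
    resAux G₁ (x * mapDomainAlgHom k k G₁.subtype y) = resAux G₁ x * y := by
  induction y using MonoidAlgebra.induction_linear with
  | zero => rw [map_zero, mul_zero, mul_zero, resAux_zero]
  | add f g hf hg => rw [map_add, mul_add, resAux_add, hf, hg, mul_add]
  | single h d =>
      have : (mapDomainAlgHom k k G₁.subtype) (MonoidAlgebra.single h d) =
          MonoidAlgebra.single (↑h : G) d := by
        rw [mapDomainAlgHom_apply, MonoidAlgebra.mapDomain_single]; rfl
      rw [this]
      exact resAux_mul_single G₁ x h d

lemma comap_map_self (G₁ : Subgroup G) (J : Ideal (MonoidAlgebra k G₁)) :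
    Ideal.comap (mapDomainAlgHom k k G₁.subtype)
      (Ideal.map (mapDomainAlgHom k k G₁.subtype) J) = J := by
  refine le_antisymm (fun y hy => ?_) Ideal.le_comap_map
  have hy' : (mapDomainAlgHom k k G₁.subtype) y ∈
      Ideal.map (mapDomainAlgHom k k G₁.subtype) J := hy
  have key : ∀ x ∈ Ideal.map (mapDomainAlgHom k k G₁.subtype) J,
      ∀ r : MonoidAlgebra k G, resAux G₁ (r * x) ∈ J := by
    intro x hx
    refine Submodule.span_induction (fun z hz r => ?_) (fun r => ?_)
      (fun z w _ _ hz hw r => ?_) (fun s z _ hz r => ?_) hx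
    · obtain ⟨j, hj, rfl⟩ := hz
      rw [resAux_mul]
      exact J.mul_mem_left _ hj
    · rw [mul_zero, resAux_zero]; exact J.zero_mem
    · rw [mul_add, resAux_add]; exact J.add_mem (hz r) (hw r)
    · rw [smul_eq_mul, ← mul_assoc]; exact hz (r * s)
  have := key _ hy' 1
  rwa [one_mul, resAux_map] at this

lemma ideal_map_algHom_eq {R S : Type*} [CommRing R] [CommRing S] [Algebra k R] [Algebra k S]
    (f : R →ₐ[k] S) (I : Ideal R) : Ideal.map f I = Ideal.map f.toRingHom I := rfl

lemma map_map_aux {H G₁ : Subgroup G} (hle : H ≤ G₁) (J : Ideal (MonoidAlgebra k H)) :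
    Ideal.map (mapDomainAlgHom k k G₁.subtype)
      (Ideal.map (mapDomainAlgHom k k (Subgroup.inclusion hle)) J) =
    Ideal.map (mapDomainAlgHom k k H.subtype) J := by
  have hcomp : (mapDomainAlgHom k k G₁.subtype).comp
      (mapDomainAlgHom k k (Subgroup.inclusion hle)) = mapDomainAlgHom k k H.subtype := by
    rw [← mapDomainAlgHom_comp, Subgroup.subtype_comp_inclusion]
  rw [ideal_map_algHom_eq, ideal_map_algHom_eq, Ideal.map_map, ideal_map_algHom_eq]
  exact congrArg (fun f => Ideal.map f J) (congrArg AlgHom.toRingHom hcomp)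

end Aux

/-- Let `k` be a field, `G` an abelian group, `H ≤ G` and `I` an ideal of
the group algebra `kG`.  Then `I = (I ∩ kH)·kG` if and only if for every subgroup `G₁`
generated by `H` together with finitely many elements of `G` one has
`I ∩ kG₁ = (I ∩ kH)·kG₁`. -/
theorem controlled_iff_controlled_on_fg_over (k : Type*) [Field k]
    (G : Type*) [CommGroup G] (H : Subgroup G)
    (I : Ideal (MonoidAlgebra k G)) :
    I = Ideal.map (MonoidAlgebra.mapDomainAlgHom k k H.subtype)
          (Ideal.comap (MonoidAlgebra.mapDomainAlgHom k k H.subtype) I) ↔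
      ∀ (G₁ : Subgroup G) (S : Finset G) (hG₁ : G₁ = H ⊔ Subgroup.closure (S : Set G)),
        Ideal.comap (MonoidAlgebra.mapDomainAlgHom k k G₁.subtype) I =
          Ideal.map (MonoidAlgebra.mapDomainAlgHom k k
              (Subgroup.inclusion (show H ≤ G₁ by rw [hG₁]; exact le_sup_left)))
            (Ideal.comap (MonoidAlgebra.mapDomainAlgHom k k H.subtype) I) := by
  constructor
  · intro h G₁ S hG₁
    have hle : H ≤ G₁ := by rw [hG₁]; exact le_sup_left
    conv_lhs => rw [h]
    rw [← map_map_aux hle, comap_map_self]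
  · intro h
    refine le_antisymm (fun x hx => ?_) Ideal.map_comap_le
    set G₁ : Subgroup G := H ⊔ Subgroup.closure (x.coeff.support : Set G) with hG₁
    have hle : H ≤ G₁ := le_sup_left
    have hsupp : ↑x.coeff.support ⊆ Set.range (⇑G₁.subtype) := by
      intro g hg
      refine ⟨⟨g, ?_⟩, rfl⟩
      exact Subgroup.mem_sup_right (Subgroup.subset_closure hg)
    have hxy : mapDomainAlgHom k k G₁.subtype (resAux G₁ x) = x := by
      rw [mapDomainAlgHom_apply]
      apply MonoidAlgebra.coeff_injective
      exact Finsupp.mapDomain_comapDomain _ G₁.subtype_injective x.coeff hsupp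
    have hy : resAux G₁ x ∈ Ideal.comap (mapDomainAlgHom k k G₁.subtype) I := by
      rw [Ideal.mem_comap, hxy]; exact hx
    rw [h G₁ x.coeff.support hG₁] at hy
    have := Ideal.mem_map_of_mem (mapDomainAlgHom k k G₁.subtype) hy
    rw [map_map_aux hle, hxy] at this
    exact this
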